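/- arXiv:2602.03450 — 3 statements merged into one kernel-verified Lean document; each statement's English description precedes it below -/
import Mathlib

section
/- Let A be a commutative ring with identity. Define on the set 1 + A[[t]]^+ of power series with constant term 1 the operations: addition given by multiplication of power series, and multiplication given by (1 + Σ aₙtⁿ) ×̃ (1 + Σ bₙtⁿ) = 1 + Σ Pₙ(a₁,…,aₙ; b₁,…,bₙ) tⁿ, where Pₙ is the universal polynomial such that Pₙ(s₁,…,sₙ; σ₁,…,σₙ) is the coefficient of tⁿ in ∏_{i,j}(1 + ξᵢζⱼt), with sᵢ, σᵢ the elementary symmetric polynomials in the ξ's and ζ's. Then these operations make 1 + A[[t]]^+ into a commutative ring with zero element 1 and multiplicative identity 1 + t. -/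
/-- The `k`-th elementary symmetric function of the family `ξ`. -/
def esymmF {R : Type} [CommRing R] {q : ℕ} (k : ℕ) (ξ : Fin q → R) : R :=
  ∑ s ∈ Finset.powersetCard k Finset.univ, ∏ i ∈ s, ξ i

/-- `P` is the family of universal polynomials `Pₙ` such that
`Pₙ(s₁,…,sₙ; σ₁,…,σₙ)` is the coefficient of `tⁿ` in `∏_{i,j} (1 + ξᵢζⱼ t)`,
where `sᵢ`, `σᵢ` are the elementary symmetric functions of the `ξ`'s and `ζ`'s
(for any `q, r ≥ n` and any values in any commutative ring). -/
def IsWittMulFamily (P : ∀ n : ℕ, MvPolynomial (Fin n ⊕ Fin n) ℤ) : Prop :=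
  ∀ (S : Type) [CommRing S], ∀ (n q r : ℕ), n ≤ q → n ≤ r →
    ∀ (ξ : Fin q → S) (ζ : Fin r → S),
      MvPolynomial.eval₂ (Int.castRingHom S)
          (Sum.elim (fun i : Fin n => esymmF ((i : ℕ) + 1) ξ) fun j : Fin n => esymmF ((j : ℕ) + 1) ζ)
          (P n)
        = (∏ i : Fin q, ∏ j : Fin r,
            (1 + Polynomial.C (ξ i * ζ j) * Polynomial.X)).coeff n

/-- The multiplication `×̃` on `1 + A[[t]]⁺` defined coefficientwise by the
universal polynomials `Pₙ` evaluated at the coefficients of `f` and `g`. -/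
noncomputable def wmul {A : Type} [CommRing A]
    (P : ∀ n : ℕ, MvPolynomial (Fin n ⊕ Fin n) ℤ) (f g : PowerSeries A) :
    PowerSeries A :=
  PowerSeries.mk fun n =>
    MvPolynomial.eval₂ (Int.castRingHom A)
      (Sum.elim (fun i : Fin n => PowerSeries.coeff ((i : ℕ) + 1) f)
        fun j : Fin n => PowerSeries.coeff ((j : ℕ) + 1) g)
      (P n)

/-! ### Auxiliary lemmas -/

open Polynomial in
lemma coeff_one_add_prod {R : Type} [CommRing R] {ι : Type} [DecidableEq ι]
    (s : Finset ι) (v : ι → R) :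
    ∀ k : ℕ, (∏ i ∈ s, (1 + C (v i) * X)).coeff k
      = ∑ t ∈ Finset.powersetCard k s, ∏ i ∈ t, v i := by
  induction s using Finset.induction with
  | empty =>
      intro k
      cases k with
      | zero => simp
      | succ k =>
          rw [Finset.prod_empty, Finset.powersetCard_eq_empty.2 (by simp)]
          simp [Polynomial.coeff_one]
  | @insert a s ha ih =>
      intro k
      rw [Finset.prod_insert ha, add_mul, one_mul, coeff_add, mul_assoc, coeff_C_mul]
      cases k with
      | zero =>
          rw [mul_coeff_zero, coeff_X_zero, zero_mul, mul_zero, add_zero, ih 0]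
          simp
      | succ k =>
          rw [coeff_X_mul, ih (k+1), ih k, Finset.powersetCard_succ_insert ha,
            Finset.sum_union]
          · congr 1
            rw [Finset.sum_image, Finset.mul_sum]
            · refine Finset.sum_congr rfl fun t ht => ?_
              rw [Finset.prod_insert fun hat => ha ((Finset.mem_powersetCard.1 ht).1 hat)]
            · intro t ht t' ht' hins
              have hat : a ∉ t := fun hat => ha ((Finset.mem_powersetCard.1 ht).1 hat)
              have hat' : a ∉ t' := fun hat => ha ((Finset.mem_powersetCard.1 ht').1 hat)
              rw [← Finset.erase_insert hat, ← Finset.erase_insert hat', hins]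
          · rw [Finset.disjoint_left]
            intro t ht htim
            obtain ⟨t', ht', rfl⟩ := Finset.mem_image.1 htim
            exact ha ((Finset.mem_powersetCard.1 ht).1 (Finset.mem_insert_self a t'))

lemma esymmF_hom {R S : Type} [CommRing R] [CommRing S] (φ : R →+* S) {q : ℕ}
    (k : ℕ) (ξ : Fin q → R) : φ (esymmF k ξ) = esymmF k (fun i => φ (ξ i)) := by
  simp [esymmF, map_sum, map_prod]

open Polynomial in
lemma coeff_prod_univ {R ι : Type} [CommRing R] [Fintype ι] [DecidableEq ι] {m : ℕ}
    (e : ι ≃ Fin m) (v : ι → R) (k : ℕ) :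
    (∏ i : ι, (1 + C (v i) * X)).coeff k = esymmF k (v ∘ e.symm) := by
  rw [esymmF, ← coeff_one_add_prod Finset.univ (v ∘ e.symm) k,
    show (∏ j : Fin m, (1 + C ((v ∘ e.symm) j) * X)) = ∏ i : ι, (1 + C (v i) * X) from
      Equiv.prod_comp e.symm fun i => 1 + C (v i) * X]

open Polynomial in
lemma esymmF_eq_coeff {R : Type} [CommRing R] {q : ℕ} (k : ℕ) (ξ : Fin q → R) :
    esymmF k ξ = (∏ i : Fin q, (1 + C (ξ i) * X)).coeff k := by
  rw [coeff_prod_univ (Equiv.refl (Fin q)) ξ k]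
  rfl

lemma esymmF_zero {R : Type} [CommRing R] {q : ℕ} (ξ : Fin q → R) :
    esymmF 0 ξ = 1 := by simp [esymmF]

/-- Naturality of `wmul` in the coefficient ring. -/
lemma coeff_wmul_map {A B : Type} [CommRing A] [CommRing B]
    (P : ∀ n : ℕ, MvPolynomial (Fin n ⊕ Fin n) ℤ) (φ : A →+* B) (f g : PowerSeries A) (n : ℕ) :
    φ (PowerSeries.coeff n (wmul P f g))
      = PowerSeries.coeff n (wmul P (PowerSeries.map φ f) (PowerSeries.map φ g)) := by
  simp only [wmul, PowerSeries.coeff_mk]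
  rw [MvPolynomial.eval₂_comp_left φ]
  congr 1
  · exact RingHom.ext fun x => by simp
  · funext x
    cases x with
    | inl i => simp
    | inr j => simp

lemma wmul_map {A B : Type} [CommRing A] [CommRing B]
    (P : ∀ n : ℕ, MvPolynomial (Fin n ⊕ Fin n) ℤ) (φ : A →+* B) (f g : PowerSeries A) :
    PowerSeries.map φ (wmul P f g) = wmul P (PowerSeries.map φ f) (PowerSeries.map φ g) :=
  PowerSeries.ext fun n => by rw [PowerSeries.coeff_map, coeff_wmul_map]

lemma constantCoeff_wmul {A : Type} [CommRing A] {P : ∀ n : ℕ, MvPolynomial (Fin n ⊕ Fin n) ℤ}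
    (hP : IsWittMulFamily P) (f g : PowerSeries A) :
    PowerSeries.coeff 0 (wmul P f g) = 1 := by
  have h := hP A 0 0 0 le_rfl le_rfl (fun i => i.elim0) (fun i => i.elim0)
  simp only [wmul, PowerSeries.coeff_mk]
  rw [show (Sum.elim (fun i : Fin 0 => PowerSeries.coeff ((i : ℕ) + 1) f)
        fun j : Fin 0 => PowerSeries.coeff ((j : ℕ) + 1) g)
      = (Sum.elim (fun i : Fin 0 => esymmF ((i : ℕ) + 1) (fun i : Fin 0 => i.elim0))
        fun j : Fin 0 => esymmF ((j : ℕ) + 1) (fun i : Fin 0 => i.elim0)) from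
    funext fun x => by cases x with | inl i => exact i.elim0 | inr j => exact j.elim0]
  rw [h]
  simp

open Polynomial in
/-- The central computation. -/
lemma coeff_wmul_eq {P : ∀ n : ℕ, MvPolynomial (Fin n ⊕ Fin n) ℤ} (hP : IsWittMulFamily P)
    {B : Type} [CommRing B] {q r : ℕ} (ξ : Fin q → B) (ζ : Fin r → B)
    {F G : PowerSeries B} {N : ℕ}
    (hF : ∀ k, k ≤ N → PowerSeries.coeff k F = esymmF k ξ)
    (hG : ∀ k, k ≤ N → PowerSeries.coeff k G = esymmF k ζ)
    {n : ℕ} (hn : n ≤ N) (hq : n ≤ q) (hr : n ≤ r) :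
    PowerSeries.coeff n (wmul P F G)
      = (∏ i : Fin q, ∏ j : Fin r, (1 + C (ξ i * ζ j) * X)).coeff n := by
  rw [← hP B n q r hq hr ξ ζ]
  simp only [wmul, PowerSeries.coeff_mk]
  congr 1
  funext x
  cases x with
  | inl i => exact hF _ (Nat.succ_le_of_lt (lt_of_lt_of_le i.isLt hn))
  | inr j => exact hG _ (Nat.succ_le_of_lt (lt_of_lt_of_le j.isLt hn))

/-! ### Splitting lemmas -/

open Polynomial in
lemma adjoinRoot_of_injective {R : Type} [CommRing R] {g : R[X]} (hg : g.Monic)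
    (hdeg : g.natDegree ≠ 0) : Function.Injective (AdjoinRoot.of g) := by
  rcases subsingleton_or_nontrivial R with h | h
  · exact fun a b _ => Subsingleton.elim a b
  · intro a b hab
    have hdeg' : degree (C a) < degree g := lt_of_le_of_lt (degree_C_le)
      (natDegree_pos_iff_degree_pos.mp (Nat.pos_of_ne_zero hdeg))
    have hdeg'' : degree (C b) < degree g := lt_of_le_of_lt (degree_C_le)
      (natDegree_pos_iff_degree_pos.mp (Nat.pos_of_ne_zero hdeg))
    have h2 : AdjoinRoot.modByMonicHom hg (AdjoinRoot.of g a)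
        = AdjoinRoot.modByMonicHom hg (AdjoinRoot.of g b) := by rw [hab]
    rw [show AdjoinRoot.of g a = AdjoinRoot.mk g (C a) from rfl,
      show AdjoinRoot.of g b = AdjoinRoot.mk g (C b) from rfl,
      AdjoinRoot.modByMonicHom_mk, AdjoinRoot.modByMonicHom_mk,
      (Polynomial.modByMonic_eq_self_iff hg).2 hdeg',
      (Polynomial.modByMonic_eq_self_iff hg).2 hdeg''] at h2
    exact C_injective h2

open Polynomial in
/-- Every monic polynomial splits completely in an injective extension. -/
lemma exists_factor : ∀ (n : ℕ) (A : Type) [CommRing A] (p : A[X]), p.Monic → p.natDegree = n →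
    ∃ (B : Type) (_ : CommRing B) (φ : A →+* B) (lam : Fin n → B),
      Function.Injective φ ∧ p.map φ = ∏ i : Fin n, (X - C (lam i)) := by
  intro n
  induction n with
  | zero =>
      intro A _ p hm hd
      refine ⟨A, inferInstance, RingHom.id A, fun i => i.elim0, fun a b h => h, ?_⟩
      rw [hm.natDegree_eq_zero.mp hd]
      simp
  | succ n ih =>
      intro A _ p hm hd
      rcases subsingleton_or_nontrivial A with hA | hA
      · exact ⟨A, inferInstance, RingHom.id A, fun _ => 0, fun a b _ => Subsingleton.elim a b,
          Subsingleton.elim _ _⟩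
      · have hdeg0 : p.natDegree ≠ 0 := by omega
        have hinj1 : Function.Injective (AdjoinRoot.of p) := adjoinRoot_of_injective hm hdeg0
        haveI : Nontrivial (AdjoinRoot p) :=
          ⟨⟨AdjoinRoot.of p 0, AdjoinRoot.of p 1, fun hc => zero_ne_one (hinj1 hc)⟩⟩
        have hroot : (p.map (AdjoinRoot.of p)).IsRoot (AdjoinRoot.root p) := by
          rw [IsRoot, eval_map]; exact AdjoinRoot.eval₂_root p
        obtain ⟨q, hq⟩ := dvd_iff_isRoot.mpr hroot
        have hmonX : (X - C (AdjoinRoot.root p)).Monic := monic_X_sub_C _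
        have hmap : (p.map (AdjoinRoot.of p)).Monic := hm.map _
        have hqm : q.Monic := hmonX.of_mul_monic_left (hq ▸ hmap)
        have hqd : q.natDegree = n := by
          have h1 : (p.map (AdjoinRoot.of p)).natDegree = n + 1 := by
            rw [hm.natDegree_map]; exact hd
          rw [hq, hmonX.natDegree_mul hqm, natDegree_X_sub_C] at h1
          omega
        obtain ⟨B, _, φ₂, lam, hinj2, hfac⟩ := ih (AdjoinRoot p) q hqm hqd
        refine ⟨B, inferInstance, φ₂.comp (AdjoinRoot.of p),
          Fin.cons (φ₂ (AdjoinRoot.root p)) lam, hinj2.comp hinj1, ?_⟩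
        rw [← Polynomial.map_map, hq, Polynomial.map_mul, hfac,
          show (∏ i : Fin (n + 1), (X - C (Fin.cons (φ₂ (AdjoinRoot.root p)) lam i)))
            = (X - C (φ₂ (AdjoinRoot.root p))) * ∏ i : Fin n, (X - C (lam i)) by
              rw [Fin.prod_univ_succ]; simp]
        simp

open Polynomial in
/-- Splitting of a power series with constant term 1. -/
lemma exists_split {A : Type} [CommRing A] (f : PowerSeries A)
    (hf : PowerSeries.constantCoeff f = 1) (n : ℕ) :
    ∃ (B : Type) (_ : CommRing B) (φ : A →+* B) (ξ : Fin n → B),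
      Function.Injective φ ∧ ∀ k, k ≤ n → φ (PowerSeries.coeff k f) = esymmF k ξ := by
  rcases subsingleton_or_nontrivial A with hA | hA
  · exact ⟨A, inferInstance, RingHom.id A, fun _ => 0, fun a b _ => Subsingleton.elim a b,
      fun k _ => Subsingleton.elim _ _⟩
  set p : A[X] := ∑ j ∈ Finset.range (n+1), C (PowerSeries.coeff j f) * X ^ (n - j) with hp
  have hcoeff : ∀ k, k ≤ n → p.coeff (n - k) = PowerSeries.coeff k f := by
    intro k hk
    rw [hp, finset_sum_coeff]
    rw [Finset.sum_eq_single k]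
    · rw [coeff_C_mul, coeff_X_pow, if_pos rfl, mul_one]
    · intro j hj hjk
      rw [coeff_C_mul, coeff_X_pow, if_neg, mul_zero]
      rw [Finset.mem_range] at hj
      omega
    · intro hk'
      exact absurd (Finset.mem_range.2 (by omega)) hk'
  have hcn : p.coeff n = 1 := by
    have := hcoeff 0 (Nat.zero_le n)
    rwa [Nat.sub_zero, PowerSeries.coeff_zero_eq_constantCoeff, hf] at this
  have hdle : p.natDegree ≤ n := by
    rw [hp]
    refine natDegree_sum_le_of_forall_le _ _ fun j hj => ?_
    exact le_trans (natDegree_C_mul_le _ _) (by rw [natDegree_X_pow]; omega)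
  have hm : p.Monic := monic_of_natDegree_le_of_coeff_eq_one n hdle hcn
  have hd : p.natDegree = n := by
    have h1 : n ≤ p.natDegree := le_natDegree_of_ne_zero (by rw [hcn]; exact one_ne_zero)
    omega
  obtain ⟨B, _, φ, lam, hinj, hfac⟩ := exists_factor n A p hm hd
  refine ⟨B, inferInstance, φ, fun i => -lam i, hinj, fun k hk => ?_⟩
  have h2 : φ (PowerSeries.coeff k f) = (p.map φ).coeff (n - k) := by
    rw [coeff_map, hcoeff k hk]
  rw [h2, hfac,
    show (∏ i : Fin n, (X - C (lam i))) = ∏ i : Fin n, (X + C ((fun i => -lam i) i)) by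
      refine Finset.prod_congr rfl fun i _ => ?_
      rw [sub_eq_add_neg, ← C_neg],
    Finset.prod_X_add_C_coeff Finset.univ (fun i => -lam i)
      (by rw [Finset.card_univ, Fintype.card_fin]; omega)]
  rw [Finset.card_univ, Fintype.card_fin, show n - (n - k) = k from by omega, esymmF]

/-- Simultaneous splitting of three power series. -/
lemma exists_split3 {A : Type} [CommRing A] (f g h : PowerSeries A)
    (hf : PowerSeries.constantCoeff f = 1) (hg : PowerSeries.constantCoeff g = 1)
    (hh : PowerSeries.constantCoeff h = 1) (n : ℕ) :
    ∃ (B : Type) (_ : CommRing B) (ψ : A →+* B) (ξ ζ ω : Fin n → B),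
      Function.Injective ψ ∧
      (∀ k, k ≤ n → PowerSeries.coeff k (PowerSeries.map ψ f) = esymmF k ξ) ∧
      (∀ k, k ≤ n → PowerSeries.coeff k (PowerSeries.map ψ g) = esymmF k ζ) ∧
      (∀ k, k ≤ n → PowerSeries.coeff k (PowerSeries.map ψ h) = esymmF k ω) := by
  obtain ⟨B₁, _, φ₁, ξ₁, hi1, hs1⟩ := exists_split f hf n
  have hg1 : PowerSeries.constantCoeff (PowerSeries.map φ₁ g) = 1 := by
    rw [← PowerSeries.coeff_zero_eq_constantCoeff_apply, PowerSeries.coeff_map,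
      PowerSeries.coeff_zero_eq_constantCoeff_apply, hg, map_one]
  obtain ⟨B₂, _, φ₂, ζ₂, hi2, hs2⟩ := exists_split (PowerSeries.map φ₁ g) hg1 n
  have hh1 : PowerSeries.constantCoeff
      (PowerSeries.map (φ₂.comp φ₁) h) = 1 := by
    rw [← PowerSeries.coeff_zero_eq_constantCoeff_apply, PowerSeries.coeff_map,
      PowerSeries.coeff_zero_eq_constantCoeff_apply, hh, map_one]
  obtain ⟨B₃, _, φ₃, ω, hi3, hs3⟩ := exists_split (PowerSeries.map (φ₂.comp φ₁) h) hh1 n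
  refine ⟨B₃, inferInstance, (φ₃.comp φ₂).comp φ₁,
    fun i => φ₃ (φ₂ (ξ₁ i)), fun i => φ₃ (ζ₂ i), ω,
    (hi3.comp hi2).comp hi1, fun k hk => ?_, fun k hk => ?_, fun k hk => ?_⟩
  · rw [PowerSeries.coeff_map]
    simp only [RingHom.coe_comp, Function.comp_apply]
    rw [hs1 k hk, esymmF_hom φ₂, esymmF_hom φ₃]
  · rw [PowerSeries.coeff_map]
    simp only [RingHom.coe_comp, Function.comp_apply]
    rw [← PowerSeries.coeff_map, hs2 k hk, esymmF_hom φ₃]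
  · rw [PowerSeries.coeff_map]
    simp only [RingHom.coe_comp, Function.comp_apply]
    simpa [PowerSeries.coeff_map] using hs3 k hk

/-- on `1 + A[[t]]⁺` the operations "addition = multiplication of
power series" and "multiplication = `wmul P`" (with `Pₙ` the universal
polynomials) form a commutative ring with zero element `1` and multiplicative
identity `1 + t`: addition is the multiplicative group of such series,
`wmul` is commutative, associative, distributes over addition, and `1 + t`
is a multiplicative identity. -/
theorem wittRing_structure {A : Type} [CommRing A]
    (P : ∀ n : ℕ, MvPolynomial (Fin n ⊕ Fin n) ℤ) (hP : IsWittMulFamily P) :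
    ∀ f g h : PowerSeries A,
      PowerSeries.constantCoeff f = 1 →
      PowerSeries.constantCoeff g = 1 →
      PowerSeries.constantCoeff h = 1 →
      PowerSeries.constantCoeff (f * g) = 1 ∧
      PowerSeries.constantCoeff (wmul P f g) = 1 ∧
      wmul P f g = wmul P g f ∧
      wmul P (wmul P f g) h = wmul P f (wmul P g h) ∧
      wmul P (f * g) h = wmul P f h * wmul P g h ∧
      wmul P (1 + PowerSeries.X) f = f ∧
      ∃ finv : PowerSeries A, PowerSeries.constantCoeff finv = 1 ∧ f * finv = 1 := by
  intro f g h hf hg hh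
  refine ⟨by rw [map_mul, hf, hg, one_mul], ?_, ?_, ?_, ?_, ?_, ?_⟩
  · rw [← PowerSeries.coeff_zero_eq_constantCoeff_apply]
    exact constantCoeff_wmul hP f g
  · -- commutativity
    ext n
    obtain ⟨B, _, ψ, ξ, ζ, ω, hinj, hsf, hsg, hsh⟩ := exists_split3 f g h hf hg hh n
    apply hinj
    rw [coeff_wmul_map P ψ f g n, coeff_wmul_map P ψ g f n,
      coeff_wmul_eq hP ξ ζ hsf hsg le_rfl le_rfl le_rfl,
      coeff_wmul_eq hP ζ ξ hsg hsf le_rfl le_rfl le_rfl]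
    congr 1
    rw [Finset.prod_comm]
    exact Finset.prod_congr rfl fun j _ => Finset.prod_congr rfl fun i _ => by rw [mul_comm (ξ i) (ζ j)]
  · -- associativity
    ext n
    rcases Nat.eq_zero_or_pos n with hn | hn
    · subst hn
      rw [constantCoeff_wmul hP, constantCoeff_wmul hP]
    obtain ⟨B, _, ψ, ξ, ζ, ω, hinj, hsf, hsg, hsh⟩ := exists_split3 f g h hf hg hh n
    have hnn : n ≤ n * n := by nlinarith
    apply hinj
    set u : Fin (n * n) → B := (fun x : Fin n × Fin n => ξ x.1 * ζ x.2) ∘ finProdFinEquiv.symm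
      with hu_def
    set v : Fin (n * n) → B := (fun x : Fin n × Fin n => ζ x.1 * ω x.2) ∘ finProdFinEquiv.symm
      with hv_def
    have hu : ∀ k, k ≤ n → PowerSeries.coeff k
        (wmul P (PowerSeries.map ψ f) (PowerSeries.map ψ g)) = esymmF k u := by
      intro k hk
      rw [coeff_wmul_eq hP ξ ζ hsf hsg hk hk hk,
        ← Fintype.prod_prod_type' fun i j => 1 + Polynomial.C (ξ i * ζ j) * Polynomial.X,
        coeff_prod_univ finProdFinEquiv (fun x : Fin n × Fin n => ξ x.1 * ζ x.2) k, hu_def]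
    have hv : ∀ k, k ≤ n → PowerSeries.coeff k
        (wmul P (PowerSeries.map ψ g) (PowerSeries.map ψ h)) = esymmF k v := by
      intro k hk
      rw [coeff_wmul_eq hP ζ ω hsg hsh hk hk hk,
        ← Fintype.prod_prod_type' fun i j => 1 + Polynomial.C (ζ i * ω j) * Polynomial.X,
        coeff_prod_univ finProdFinEquiv (fun x : Fin n × Fin n => ζ x.1 * ω x.2) k, hv_def]
    rw [coeff_wmul_map P ψ (wmul P f g) h n, coeff_wmul_map P ψ f (wmul P g h) n,
      wmul_map P ψ f g, wmul_map P ψ g h,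
      coeff_wmul_eq hP u ω hu hsh le_rfl hnn le_rfl,
      coeff_wmul_eq hP ξ v hsf hv le_rfl le_rfl hnn]
    congr 1
    calc ∏ p : Fin (n * n), ∏ l : Fin n, (1 + Polynomial.C (u p * ω l) * Polynomial.X)
        = ∏ x : Fin n × Fin n, ∏ l : Fin n,
            (1 + Polynomial.C (u (finProdFinEquiv x) * ω l) * Polynomial.X) :=
          (Equiv.prod_comp finProdFinEquiv _).symm
      _ = ∏ i : Fin n, ∏ j : Fin n, ∏ l : Fin n,
            (1 + Polynomial.C (ξ i * ζ j * ω l) * Polynomial.X) := by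
          rw [Fintype.prod_prod_type]
          exact Finset.prod_congr rfl fun i _ => Finset.prod_congr rfl fun j _ =>
            Finset.prod_congr rfl fun l _ => by
            simp only [hu_def, Function.comp_apply, Equiv.symm_apply_apply]
      _ = ∏ i : Fin n, ∏ j : Fin n, ∏ l : Fin n,
            (1 + Polynomial.C (ξ i * (ζ j * ω l)) * Polynomial.X) := by
          simp_rw [mul_assoc]
      _ = ∏ i : Fin n, ∏ p : Fin (n * n),
            (1 + Polynomial.C (ξ i * v p) * Polynomial.X) := by
          refine Finset.prod_congr rfl fun i _ => ?_
          rw [← Equiv.prod_comp finProdFinEquiv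
              fun p => (1 + Polynomial.C (ξ i * v p) * Polynomial.X),
            Fintype.prod_prod_type]
          exact Finset.prod_congr rfl fun j _ => Finset.prod_congr rfl fun l _ => by
            simp only [hv_def, Function.comp_apply, Equiv.symm_apply_apply]
  · -- distributivity
    ext n
    obtain ⟨B, _, ψ, ξ, ζ, ω, hinj, hsf, hsg, hsh⟩ := exists_split3 f g h hf hg hh n
    apply hinj
    set w : Fin (n + n) → B := (Sum.elim ξ ζ) ∘ finSumFinEquiv.symm with hw_def
    have hw : ∀ k, k ≤ n → PowerSeries.coeff k
        (PowerSeries.map ψ f * PowerSeries.map ψ g) = esymmF k w := by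
      intro k hk
      rw [PowerSeries.coeff_mul,
        Finset.sum_congr rfl (fun p hp => by
          have hp' := Finset.HasAntidiagonal.mem_antidiagonal.1 hp
          rw [hsf p.1 (by omega), hsg p.2 (by omega), esymmF_eq_coeff, esymmF_eq_coeff]),
        ← Polynomial.coeff_mul,
        show (∏ i : Fin n, (1 + Polynomial.C (ξ i) * Polynomial.X))
            * (∏ i : Fin n, (1 + Polynomial.C (ζ i) * Polynomial.X))
          = ∏ x : Fin n ⊕ Fin n, (1 + Polynomial.C (Sum.elim ξ ζ x) * Polynomial.X) from by
            rw [Fintype.prod_sum_type]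
            rfl,
        coeff_prod_univ finSumFinEquiv (Sum.elim ξ ζ) k]
    rw [coeff_wmul_map P ψ (f * g) h n, map_mul,
      coeff_wmul_eq hP w ω hw hsh le_rfl (Nat.le_add_right n n) le_rfl,
      ← PowerSeries.coeff_map, map_mul, wmul_map P ψ f h, wmul_map P ψ g h,
      PowerSeries.coeff_mul,
      Finset.sum_congr rfl (fun p hp => by
        have hp' := Finset.HasAntidiagonal.mem_antidiagonal.1 hp
        rw [coeff_wmul_eq hP ξ ω hsf hsh (by omega : p.1 ≤ n) (by omega) (by omega),
          coeff_wmul_eq hP ζ ω hsg hsh (by omega : p.2 ≤ n) (by omega) (by omega)]),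
      ← Polynomial.coeff_mul]
    congr 1
    rw [← Equiv.prod_comp finSumFinEquiv
        (fun p => ∏ l : Fin n, (1 + Polynomial.C (w p * ω l) * Polynomial.X)),
      Fintype.prod_sum_type]
    congr 1
    · exact Finset.prod_congr rfl fun x _ => Finset.prod_congr rfl fun l _ => by
        simp only [hw_def, Function.comp_apply, Equiv.symm_apply_apply, Sum.elim_inl,
          Sum.elim_inr]
    · exact Finset.prod_congr rfl fun x _ => Finset.prod_congr rfl fun l _ => by
        simp only [hw_def, Function.comp_apply, Equiv.symm_apply_apply, Sum.elim_inl,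
          Sum.elim_inr]
  · -- multiplicative identity
    ext n
    rcases Nat.eq_zero_or_pos n with hn | hn
    · subst hn
      rw [constantCoeff_wmul hP, PowerSeries.coeff_zero_eq_constantCoeff_apply, hf]
    obtain ⟨B, _, ψ, ζ, hinj, hs⟩ := exists_split f hf n
    apply hinj
    set ξ₀ : Fin n → B := fun i => if i = (⟨0, hn⟩ : Fin n) then 1 else 0 with hξ₀
    have hprod : (∏ i : Fin n, (1 + Polynomial.C (ξ₀ i) * Polynomial.X))
        = 1 + Polynomial.X := by
      rw [Finset.prod_eq_single (⟨0, hn⟩ : Fin n)]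
      · simp [hξ₀]
      · intro i _ hi
        simp [hξ₀, hi]
      · intro h0
        exact absurd (Finset.mem_univ _) h0
    have hmap1X : PowerSeries.map ψ (1 + PowerSeries.X) = 1 + PowerSeries.X := by
      rw [map_add, map_one, PowerSeries.map_X]
    have hsone : ∀ k, k ≤ n → PowerSeries.coeff k
        (PowerSeries.map ψ (1 + PowerSeries.X)) = esymmF k ξ₀ := by
      intro k hk
      rw [hmap1X, esymmF_eq_coeff, hprod]
      rcases k with _ | _ | k <;>
        simp [PowerSeries.coeff_one, Polynomial.coeff_one, PowerSeries.coeff_X,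
          Polynomial.coeff_X]
    have hs' : ∀ k, k ≤ n → PowerSeries.coeff k (PowerSeries.map ψ f) = esymmF k ζ := by
      intro k hk
      rw [PowerSeries.coeff_map]
      exact hs k hk
    rw [coeff_wmul_map P ψ (1 + PowerSeries.X) f n,
      coeff_wmul_eq hP ξ₀ ζ hsone hs' le_rfl le_rfl le_rfl, hs n le_rfl, esymmF_eq_coeff]
    congr 1
    rw [Finset.prod_eq_single (⟨0, hn⟩ : Fin n)]
    · exact Finset.prod_congr rfl fun j _ => by simp [hξ₀]
    · intro i _ hi
      simp [hξ₀, hi]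
    · intro h0
      exact absurd (Finset.mem_univ _) h0
  · -- inverses for addition
    refine ⟨PowerSeries.invOfUnit f 1, ?_, PowerSeries.mul_invOfUnit f 1 (by rw [hf]; rfl)⟩
    rw [PowerSeries.constantCoeff_invOfUnit]
    simp
end

section
/- Let S = ⊕_{k≥0} Sᵏ be a graded-commutative ring which vanishes in degrees above some N (e.g. the even-degree real cohomology ring of a closed manifold), with S⁰ containing ℚ. Let M be a free S-module with basis f₀,…,f_{r-1}, and let e_j = Σ_{k=0}^{r-1} (jᵏ + b_{kj}) f_k where each b_{kj} ∈ S has positive degree. Then e₀,…,e_{r-1} is also a basis of M. -/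
/-- let `S` be a graded-commutative ring (graded ℚ-algebra)
vanishing in degrees above `N`, `M` a free `S`-module with basis
`f₀,…,f_{r-1}`, and `e_j = ∑ₖ (jᵏ + b_{kj}) fₖ` with each `b_{kj}` of positive
degree. Then `e₀,…,e_{r-1}` is also a basis of `M`. -/
theorem basis_vandermonde_perturbation {S : Type} [CommRing S] [Algebra ℚ S]
    (𝒜 : ℕ → Submodule ℚ S) [GradedAlgebra 𝒜] (N : ℕ)
    (hvanish : ∀ k : ℕ, N < k → 𝒜 k = ⊥)
    {M : Type} [AddCommGroup M] [Module S M]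
    (r : ℕ) (f : Module.Basis (Fin r) S M)
    (b : Fin r → Fin r → S)
    (hb : ∀ k j : Fin r, b k j ∈ ⨆ (i : ℕ) (_ : 0 < i), 𝒜 i) :
    ∃ e : Module.Basis (Fin r) S M,
      ∀ j : Fin r,
        e j = ∑ k : Fin r, ((((j : ℕ) ^ (k : ℕ) : ℕ) : S) + b k j) • f k := by
  classical
  -- every element of the positive-degree part is nilpotent
  have hnil : ∀ k j : Fin r, IsNilpotent (b k j) := by
    intro k j
    have hle : (⨆ (i : ℕ) (_ : 0 < i), 𝒜 i) ≤ (nilradical S).restrictScalars ℚ := by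
      refine iSup₂_le fun i hi => fun x hx => ?_
      have hpow : x ^ (N + 1) ∈ 𝒜 ((N + 1) * i) := SetLike.pow_mem_graded _ hx
      have hN : N < (N + 1) * i := by nlinarith
      rw [hvanish _ hN] at hpow
      exact mem_nilradical.2 ⟨N + 1, hpow⟩
    exact mem_nilradical.1 (hle (hb k j))
  -- the Vandermonde part
  set Vq : Matrix (Fin r) (Fin r) ℚ :=
    (Matrix.vandermonde (fun j : Fin r => ((j : ℕ) : ℚ))).transpose with hVq
  have hinj : Function.Injective (fun j : Fin r => ((j : ℕ) : ℚ)) := by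
    intro i j h
    exact Fin.val_injective (Nat.cast_injective h)
  have hVqdet : Vq.det ≠ 0 := by
    rw [hVq, Matrix.det_transpose]
    exact Matrix.det_vandermonde_ne_zero_iff.2 hinj
  set A : Matrix (Fin r) (Fin r) S :=
    (fun k j => ((((j : ℕ) ^ (k : ℕ) : ℕ) : S) + b k j)) with hA
  set V : Matrix (Fin r) (Fin r) S := (algebraMap ℚ S).mapMatrix Vq with hV
  have hVdet : IsUnit V.det := by
    rw [hV, ← RingHom.map_det]
    exact (hVqdet.isUnit).map _
  -- det A - det V is nilpotent
  have hdiff : IsNilpotent (A.det - V.det) := by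
    rw [← mem_nilradical, ← Ideal.Quotient.eq_zero_iff_mem]
    set φ := Ideal.Quotient.mk (nilradical S) with hφ
    have h1 : A.map φ = V.map φ := by
      ext k j
      rw [Matrix.map_apply, Matrix.map_apply]
      simp only [Matrix.map_apply, hA, hV, RingHom.mapMatrix_apply]
      have hb0 : φ (b k j) = 0 := Ideal.Quotient.eq_zero_iff_mem.2 (mem_nilradical.2 (hnil k j))
      rw [map_add, hb0, add_zero]
      congr 1
      simp only [hVq, Matrix.transpose_apply, Matrix.vandermonde_apply]
      push_cast
      ring
    calc φ (A.det - V.det) = (A.map φ).det - (V.map φ).det := by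
          rw [map_sub, RingHom.map_det, RingHom.map_det]; rfl
      _ = 0 := by rw [h1, sub_self]
  have hAdet : IsUnit A.det := by
    have h2 : A.det = (A.det - V.det) + V.det := by ring
    rw [h2]
    exact hdiff.isUnit_add_right_of_commute hVdet (Commute.all _ _)
  -- construct the basis
  set w : Fin r → M := fun j => ∑ k : Fin r, A k j • f k with hw
  have htm : f.toMatrix w = A := by
    ext k j
    simp [Module.Basis.toMatrix_apply, hw, Finset.sum_apply, map_sum, Finsupp.single_apply]
  have hdet : IsUnit (f.det w) := by
    rw [Module.Basis.det_apply, htm]; exact hAdet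
  obtain ⟨hli, hspan⟩ := (Module.Basis.is_basis_iff_det f).2 hdet
  refine ⟨Module.Basis.mk hli hspan.ge, fun j => ?_⟩
  rw [Module.Basis.mk_apply]
end

section
/- Let B be a smooth manifold. Define Γ(B) = Z^even(B,ℝ) ⊕ (Ω^odd(B,ℝ)/Im d) with multiplication (ω₁,φ₁)*(ω₂,φ₂) = (ω₁∧ω₂, ω₁∧φ₂ + φ₁∧ω₂ − dφ₁∧φ₂). Then this multiplication is well-defined (independent of representatives modulo exact forms), commutative, and associative, and (1,0) is a multiplicative identity. -/
/-- The even part `⊕ᵢ A^{2i}` of a graded algebra. -/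
def evenPart {A : Type} [Ring A] [Algebra ℝ A] (grade : ℕ → Submodule ℝ A) :
    Submodule ℝ A :=
  ⨆ i : ℕ, grade (2 * i)

/-- The odd part `⊕ᵢ A^{2i+1}` of a graded algebra. -/
def oddPart {A : Type} [Ring A] [Algebra ℝ A] (grade : ℕ → Submodule ℝ A) :
    Submodule ℝ A :=
  ⨆ i : ℕ, grade (2 * i + 1)

/-- The product `(ω₁,φ₁)*(ω₂,φ₂) = (ω₁∧ω₂, ω₁∧φ₂ + φ₁∧ω₂ − dφ₁∧φ₂)` on pairs
(representatives of elements of `Γ(B) = Z^even ⊕ Ω^odd/Im d`). -/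
def gammaMul {A : Type} [Ring A] [Algebra ℝ A] (d : A →ₗ[ℝ] A) (p q : A × A) :
    A × A :=
  (p.1 * q.1, p.1 * q.2 + p.2 * q.1 - d p.2 * q.2)

section Aux

variable {A : Type} [Ring A] [Algebra ℝ A] {grade : ℕ → Submodule ℝ A}

lemma evenPart_induction (p : A → Prop) {x : A} (hx : x ∈ evenPart grade)
    (hmem : ∀ i, ∀ y ∈ grade (2 * i), p y) (h0 : p 0)
    (hadd : ∀ a b, p a → p b → p (a + b)) : p x :=
  Submodule.iSup_induction (motive := p) _ hx hmem h0 hadd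

lemma oddPart_induction (p : A → Prop) {x : A} (hx : x ∈ oddPart grade)
    (hmem : ∀ i, ∀ y ∈ grade (2 * i + 1), p y) (h0 : p 0)
    (hadd : ∀ a b, p a → p b → p (a + b)) : p x :=
  Submodule.iSup_induction (motive := p) _ hx hmem h0 hadd

variable [GradedAlgebra grade]

lemma even_mul_even {x y : A} (hx : x ∈ evenPart grade) (hy : y ∈ evenPart grade) :
    x * y ∈ evenPart grade := by
  refine evenPart_induction (fun x => x * y ∈ evenPart grade) hx (fun i a ha => ?_)
    (show (0 : A) * y ∈ _ by rw [zero_mul]; exact zero_mem _)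
    (fun a b pa pb => show (a + b) * y ∈ _ by rw [add_mul]; exact add_mem pa pb)
  refine evenPart_induction (fun y => a * y ∈ evenPart grade) hy (fun j b hb => ?_)
    (show a * 0 ∈ _ by rw [mul_zero]; exact zero_mem _)
    (fun b c pb pc => show a * (b + c) ∈ _ by rw [mul_add]; exact add_mem pb pc)
  exact Submodule.mem_iSup_of_mem (i + j)
    (by rw [show 2 * (i + j) = 2 * i + 2 * j by ring]; exact SetLike.mul_mem_graded ha hb)

lemma even_mul_odd {x y : A} (hx : x ∈ evenPart grade) (hy : y ∈ oddPart grade) :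
    x * y ∈ oddPart grade := by
  refine evenPart_induction (fun x => x * y ∈ oddPart grade) hx (fun i a ha => ?_)
    (show (0 : A) * y ∈ _ by rw [zero_mul]; exact zero_mem _)
    (fun a b pa pb => show (a + b) * y ∈ _ by rw [add_mul]; exact add_mem pa pb)
  refine oddPart_induction (fun y => a * y ∈ oddPart grade) hy (fun j b hb => ?_)
    (show a * 0 ∈ _ by rw [mul_zero]; exact zero_mem _)
    (fun b c pb pc => show a * (b + c) ∈ _ by rw [mul_add]; exact add_mem pb pc)
  exact Submodule.mem_iSup_of_mem (i + j)
    (by rw [show 2 * (i + j) + 1 = 2 * i + (2 * j + 1) by ring]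
        exact SetLike.mul_mem_graded ha hb)

lemma odd_mul_even {x y : A} (hx : x ∈ oddPart grade) (hy : y ∈ evenPart grade) :
    x * y ∈ oddPart grade := by
  refine oddPart_induction (fun x => x * y ∈ oddPart grade) hx (fun i a ha => ?_)
    (show (0 : A) * y ∈ _ by rw [zero_mul]; exact zero_mem _)
    (fun a b pa pb => show (a + b) * y ∈ _ by rw [add_mul]; exact add_mem pa pb)
  refine evenPart_induction (fun y => a * y ∈ oddPart grade) hy (fun j b hb => ?_)
    (show a * 0 ∈ _ by rw [mul_zero]; exact zero_mem _)
    (fun b c pb pc => show a * (b + c) ∈ _ by rw [mul_add]; exact add_mem pb pc)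
  exact Submodule.mem_iSup_of_mem (i + j)
    (by rw [show 2 * (i + j) + 1 = 2 * i + 1 + 2 * j by ring]
        exact SetLike.mul_mem_graded ha hb)

lemma odd_mul_odd {x y : A} (hx : x ∈ oddPart grade) (hy : y ∈ oddPart grade) :
    x * y ∈ evenPart grade := by
  refine oddPart_induction (fun x => x * y ∈ evenPart grade) hx (fun i a ha => ?_)
    (show (0 : A) * y ∈ _ by rw [zero_mul]; exact zero_mem _)
    (fun a b pa pb => show (a + b) * y ∈ _ by rw [add_mul]; exact add_mem pa pb)
  refine oddPart_induction (fun y => a * y ∈ evenPart grade) hy (fun j b hb => ?_)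
    (show a * 0 ∈ _ by rw [mul_zero]; exact zero_mem _)
    (fun b c pb pc => show a * (b + c) ∈ _ by rw [mul_add]; exact add_mem pb pc)
  exact Submodule.mem_iSup_of_mem (i + j + 1)
    (by rw [show 2 * (i + j + 1) = 2 * i + 1 + (2 * j + 1) by ring]
        exact SetLike.mul_mem_graded ha hb)

variable {d : A →ₗ[ℝ] A}

omit [GradedAlgebra grade] in
lemma d_even_odd (d_grade : ∀ i : ℕ, ∀ x ∈ grade i, d x ∈ grade (i + 1))
    {x : A} (hx : x ∈ evenPart grade) : d x ∈ oddPart grade := by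
  refine evenPart_induction (fun x => d x ∈ oddPart grade) hx (fun i a ha => ?_)
    (show d 0 ∈ _ by rw [map_zero]; exact zero_mem _)
    (fun a b pa pb => show d (a + b) ∈ _ by rw [map_add]; exact add_mem pa pb)
  exact Submodule.mem_iSup_of_mem i (d_grade _ a ha)

omit [GradedAlgebra grade] in
lemma d_odd_even (d_grade : ∀ i : ℕ, ∀ x ∈ grade i, d x ∈ grade (i + 1))
    {x : A} (hx : x ∈ oddPart grade) : d x ∈ evenPart grade := by
  refine oddPart_induction (fun x => d x ∈ evenPart grade) hx (fun i a ha => ?_)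
    (show d 0 ∈ _ by rw [map_zero]; exact zero_mem _)
    (fun a b pa pb => show d (a + b) ∈ _ by rw [map_add]; exact add_mem pa pb)
  exact Submodule.mem_iSup_of_mem (i + 1)
    (by rw [show 2 * (i + 1) = 2 * i + 1 + 1 by ring]; exact d_grade _ a ha)

variable (supercomm : ∀ (i j : ℕ) (x y : A), x ∈ grade i → y ∈ grade j →
      x * y = ((-1 : ℝ) ^ (i * j)) • (y * x))

omit [GradedAlgebra grade] in
include supercomm in
lemma even_comm_grade {x y : A} {j : ℕ} (hx : x ∈ evenPart grade) (hy : y ∈ grade j) :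
    x * y = y * x := by
  refine evenPart_induction (fun x => x * y = y * x) hx (fun i a ha => ?_)
    (show (0 : A) * y = y * 0 by rw [zero_mul, mul_zero])
    (fun a b pa pb => show (a + b) * y = y * (a + b) by rw [add_mul, mul_add, pa, pb])
  show a * y = y * a
  rw [supercomm (2 * i) j a y ha hy, show 2 * i * j = 2 * (i * j) by ring, pow_mul]
  norm_num

omit [GradedAlgebra grade] in
include supercomm in
lemma even_comm_even {x y : A} (hx : x ∈ evenPart grade) (hy : y ∈ evenPart grade) :
    x * y = y * x := by
  refine evenPart_induction (fun y => x * y = y * x) hy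
    (fun j b hb => even_comm_grade supercomm hx hb)
    (show x * 0 = 0 * x by rw [zero_mul, mul_zero])
    (fun a b pa pb => show x * (a + b) = (a + b) * x by rw [add_mul, mul_add, pa, pb])

omit [GradedAlgebra grade] in
include supercomm in
lemma even_comm_odd {x y : A} (hx : x ∈ evenPart grade) (hy : y ∈ oddPart grade) :
    x * y = y * x := by
  refine oddPart_induction (fun y => x * y = y * x) hy
    (fun j b hb => even_comm_grade supercomm hx hb)
    (show x * 0 = 0 * x by rw [zero_mul, mul_zero])
    (fun a b pa pb => show x * (a + b) = (a + b) * x by rw [add_mul, mul_add, pa, pb])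

omit [GradedAlgebra grade] in
include supercomm in
lemma odd_anticomm_grade {x y : A} {i : ℕ} (hx : x ∈ grade (2 * i + 1))
    (hy : y ∈ oddPart grade) : x * y = -(y * x) := by
  refine oddPart_induction (fun y => x * y = -(y * x)) hy (fun j b hb => ?_)
    (show x * 0 = -(0 * x) by rw [mul_zero, zero_mul, neg_zero])
    (fun a b pa pb =>
      show x * (a + b) = -((a + b) * x) by rw [mul_add, add_mul, pa, pb, neg_add])
  show x * b = -(b * x)
  rw [supercomm _ _ x b hx hb, Odd.neg_one_pow ⟨2 * i * j + i + j, by ring⟩, neg_one_smul]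

omit [GradedAlgebra grade] in
include supercomm in
lemma odd_anticomm {x y : A} (hx : x ∈ oddPart grade) (hy : y ∈ oddPart grade) :
    x * y = -(y * x) := by
  refine oddPart_induction (fun x => x * y = -(y * x)) hx
    (fun i a ha => odd_anticomm_grade supercomm ha hy)
    (show (0 : A) * y = -(y * 0) by rw [zero_mul, mul_zero, neg_zero])
    (fun a b pa pb =>
      show (a + b) * y = -(y * (a + b)) by rw [add_mul, mul_add, pa, pb, neg_add])

variable (leibniz : ∀ (i : ℕ) (x y : A), x ∈ grade i →
      d (x * y) = d x * y + ((-1 : ℝ) ^ i) • (x * d y))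

omit [GradedAlgebra grade] in
include leibniz in
lemma leibniz_even {x : A} (hx : x ∈ evenPart grade) (y : A) :
    d (x * y) = d x * y + x * d y := by
  refine evenPart_induction (fun x => d (x * y) = d x * y + x * d y) hx (fun i a ha => ?_)
    (show d ((0 : A) * y) = d 0 * y + 0 * d y by
      simp)
    (fun a b pa pb => show d ((a + b) * y) = d (a + b) * y + (a + b) * d y by
      rw [add_mul, map_add, pa, pb, map_add, add_mul, add_mul]; abel)
  show d (a * y) = d a * y + a * d y
  rw [leibniz (2 * i) a y ha, pow_mul]
  norm_num

omit [GradedAlgebra grade] in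
include leibniz in
lemma leibniz_odd {x : A} (hx : x ∈ oddPart grade) (y : A) :
    d (x * y) = d x * y - x * d y := by
  refine oddPart_induction (fun x => d (x * y) = d x * y - x * d y) hx (fun i a ha => ?_)
    (show d ((0 : A) * y) = d 0 * y - 0 * d y by
      simp)
    (fun a b pa pb => show d ((a + b) * y) = d (a + b) * y - (a + b) * d y by
      rw [add_mul, map_add, pa, pb, map_add, add_mul, add_mul]; abel)
  show d (a * y) = d a * y - a * d y
  rw [leibniz (2 * i + 1) a y ha, pow_succ, pow_mul]
  norm_num
  rw [sub_eq_add_neg]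

end Aux

/-- for a graded-commutative differential graded algebra `A`
(abstracting the de Rham algebra `Ω^•(B,ℝ)` of a smooth manifold `B`, with
exterior derivative `d`), the product on
`Γ(B) = Z^even ⊕ (Ω^odd / Im d)` given by
`(ω₁,φ₁)*(ω₂,φ₂) = (ω₁∧ω₂, ω₁∧φ₂+φ₁∧ω₂−dφ₁∧φ₂)` is well defined
(independent of the representative of `φ` modulo exact forms, with values
again in `Z^even × Ω^odd` up to exacts), commutative and associative modulo
exact forms, and `(1,0)` is a multiplicative identity. -/
theorem gammaMul_wellDefined_comm_assoc_one
    {A : Type} [Ring A] [Algebra ℝ A]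
    (grade : ℕ → Submodule ℝ A) [GradedAlgebra grade]
    (supercomm : ∀ (i j : ℕ) (x y : A), x ∈ grade i → y ∈ grade j →
      x * y = ((-1 : ℝ) ^ (i * j)) • (y * x))
    (d : A →ₗ[ℝ] A)
    (d_grade : ∀ i : ℕ, ∀ x ∈ grade i, d x ∈ grade (i + 1))
    (d_sq : ∀ x : A, d (d x) = 0)
    (leibniz : ∀ (i : ℕ) (x y : A), x ∈ grade i →
      d (x * y) = d x * y + ((-1 : ℝ) ^ i) • (x * d y)) :
    ∀ ω₁ ω₂ ω₃ φ₁ φ₂ φ₃ : A,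
      ω₁ ∈ evenPart grade ⊓ LinearMap.ker d →
      ω₂ ∈ evenPart grade ⊓ LinearMap.ker d →
      ω₃ ∈ evenPart grade ⊓ LinearMap.ker d →
      φ₁ ∈ oddPart grade → φ₂ ∈ oddPart grade → φ₃ ∈ oddPart grade →
      -- the product of cycles is again a cycle
      ((gammaMul d (ω₁, φ₁) (ω₂, φ₂)).1 ∈ evenPart grade ⊓ LinearMap.ker d ∧
        (gammaMul d (ω₁, φ₁) (ω₂, φ₂)).2 ∈ oddPart grade) ∧
      -- well-definedness in the first odd variable
      (∀ φ₁' ∈ oddPart grade,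
        φ₁' - φ₁ ∈ Submodule.map d (evenPart grade) →
          (gammaMul d (ω₁, φ₁') (ω₂, φ₂)).1 = (gammaMul d (ω₁, φ₁) (ω₂, φ₂)).1 ∧
          (gammaMul d (ω₁, φ₁') (ω₂, φ₂)).2 - (gammaMul d (ω₁, φ₁) (ω₂, φ₂)).2
            ∈ Submodule.map d (evenPart grade)) ∧
      -- well-definedness in the second odd variable
      (∀ φ₂' ∈ oddPart grade,
        φ₂' - φ₂ ∈ Submodule.map d (evenPart grade) →
          (gammaMul d (ω₁, φ₁) (ω₂, φ₂')).1 = (gammaMul d (ω₁, φ₁) (ω₂, φ₂)).1 ∧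
          (gammaMul d (ω₁, φ₁) (ω₂, φ₂')).2 - (gammaMul d (ω₁, φ₁) (ω₂, φ₂)).2
            ∈ Submodule.map d (evenPart grade)) ∧
      -- commutativity (modulo exact forms)
      ((gammaMul d (ω₁, φ₁) (ω₂, φ₂)).1 = (gammaMul d (ω₂, φ₂) (ω₁, φ₁)).1 ∧
        (gammaMul d (ω₁, φ₁) (ω₂, φ₂)).2 - (gammaMul d (ω₂, φ₂) (ω₁, φ₁)).2
          ∈ Submodule.map d (evenPart grade)) ∧
      -- associativity (modulo exact forms)
      ((gammaMul d (gammaMul d (ω₁, φ₁) (ω₂, φ₂)) (ω₃, φ₃)).1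
          = (gammaMul d (ω₁, φ₁) (gammaMul d (ω₂, φ₂) (ω₃, φ₃))).1 ∧
        (gammaMul d (gammaMul d (ω₁, φ₁) (ω₂, φ₂)) (ω₃, φ₃)).2
            - (gammaMul d (ω₁, φ₁) (gammaMul d (ω₂, φ₂) (ω₃, φ₃))).2
          ∈ Submodule.map d (evenPart grade)) ∧
      -- `(1, 0)` is a multiplicative identity
      gammaMul d (1, 0) (ω₁, φ₁) = (ω₁, φ₁) := by
  intro ω₁ ω₂ ω₃ φ₁ φ₂ φ₃ h₁ h₂ h₃ hφ₁ hφ₂ hφ₃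
  obtain ⟨hω₁, hk₁⟩ := h₁
  obtain ⟨hω₂, hk₂⟩ := h₂
  obtain ⟨hω₃, hk₃⟩ := h₃
  replace hk₁ : d ω₁ = 0 := hk₁
  replace hk₂ : d ω₂ = 0 := hk₂
  replace hk₃ : d ω₃ = 0 := hk₃
  have hdφ₁ : d φ₁ ∈ evenPart grade := d_odd_even d_grade hφ₁
  have hdφ₂ : d φ₂ ∈ evenPart grade := d_odd_even d_grade hφ₂
  refine ⟨⟨⟨even_mul_even hω₁ hω₂, ?_⟩, ?_⟩, ?_, ?_, ⟨?_, ?_⟩, ⟨?_, ?_⟩, ?_⟩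
  · -- closedness of ω₁ω₂
    show d (ω₁ * ω₂) = 0
    rw [leibniz_even leibniz hω₁, hk₁, hk₂, zero_mul, mul_zero, add_zero]
  · -- second component odd
    exact sub_mem (add_mem (even_mul_odd hω₁ hφ₂) (odd_mul_even hφ₁ hω₂))
      (even_mul_odd hdφ₁ hφ₂)
  · -- well-definedness in φ₁
    intro φ₁' hφ₁' hdiff
    obtain ⟨η, hη, hdη⟩ := hdiff
    have hφeq : φ₁' = φ₁ + d η := by rw [hdη]; abel
    refine ⟨rfl, ⟨η * ω₂, even_mul_even hη hω₂, ?_⟩⟩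
    show d (η * ω₂) = (ω₁ * φ₂ + φ₁' * ω₂ - d φ₁' * φ₂) -
      (ω₁ * φ₂ + φ₁ * ω₂ - d φ₁ * φ₂)
    rw [hφeq, map_add, d_sq, leibniz_even leibniz hη, hk₂]
    noncomm_ring
  · -- well-definedness in φ₂
    intro φ₂' hφ₂' hdiff
    obtain ⟨η, hη, hdη⟩ := hdiff
    have hφeq : φ₂' = φ₂ + d η := by rw [hdη]; abel
    refine ⟨rfl, ⟨ω₁ * η - d φ₁ * η, sub_mem (even_mul_even hω₁ hη)
      (even_mul_even hdφ₁ hη), ?_⟩⟩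
    show d (ω₁ * η - d φ₁ * η) = (ω₁ * φ₂' + φ₁ * ω₂ - d φ₁ * φ₂') -
      (ω₁ * φ₂ + φ₁ * ω₂ - d φ₁ * φ₂)
    rw [hφeq, map_sub, leibniz_even leibniz hω₁, leibniz_even leibniz hdφ₁, hk₁, d_sq]
    noncomm_ring
  · -- commutativity, first component
    exact even_comm_even supercomm hω₁ hω₂
  · -- commutativity, second component
    refine ⟨φ₂ * φ₁, odd_mul_odd hφ₂ hφ₁, ?_⟩
    show d (φ₂ * φ₁) = (ω₁ * φ₂ + φ₁ * ω₂ - d φ₁ * φ₂) -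
      (ω₂ * φ₁ + φ₂ * ω₁ - d φ₂ * φ₁)
    rw [leibniz_odd leibniz hφ₂, ← even_comm_odd supercomm hdφ₁ hφ₂,
      even_comm_odd supercomm hω₁ hφ₂, ← even_comm_odd supercomm hω₂ hφ₁]
    noncomm_ring
  · -- associativity, first component
    exact mul_assoc ω₁ ω₂ ω₃
  · -- associativity, second component
    have e1 : d (ω₁ * φ₂) = ω₁ * d φ₂ := by
      rw [leibniz_even leibniz hω₁, hk₁, zero_mul, zero_add]
    have e2 : d (φ₁ * ω₂) = d φ₁ * ω₂ := by
      rw [leibniz_odd leibniz hφ₁, hk₂, mul_zero, sub_zero]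
    have e3 : d (d φ₁ * φ₂) = d φ₁ * d φ₂ := by
      rw [leibniz_even leibniz hdφ₁, d_sq, zero_mul, zero_add]
    have : (gammaMul d (gammaMul d (ω₁, φ₁) (ω₂, φ₂)) (ω₃, φ₃)).2
        = (gammaMul d (ω₁, φ₁) (gammaMul d (ω₂, φ₂) (ω₃, φ₃))).2 := by
      show (ω₁ * ω₂) * φ₃ + (ω₁ * φ₂ + φ₁ * ω₂ - d φ₁ * φ₂) * ω₃
          - d (ω₁ * φ₂ + φ₁ * ω₂ - d φ₁ * φ₂) * φ₃
        = ω₁ * (ω₂ * φ₃ + φ₂ * ω₃ - d φ₂ * φ₃) + φ₁ * (ω₂ * ω₃)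
          - d φ₁ * (ω₂ * φ₃ + φ₂ * ω₃ - d φ₂ * φ₃)
      rw [map_sub, map_add, e1, e2, e3]
      noncomm_ring
    rw [this, sub_self]
    exact zero_mem _
  · -- identity
    simp [gammaMul]
end
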